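/- Define g1 = λ + b + a6, g2 = λ_o + δ + b, g3 = δ + b + v_s, g4 = δq + b + a6, x4 = g1 + g2 + v_s, x5 = g1g2 + λ_o g3 + v_s g4, x6 = λ_o[v_s g4 + g1(δ + b)], x7 = a4a7, and y5 = x5² − 2x4x6 − x7². Then y5 = (λ_o g1 + a4a7)(λ_o g1 − a4a7) + λ_o²[v_s² + (δ + b)² + 2v_s(λ + δp + b)] + [v_s g4 + g1(δ + b)]². In particular, if λ_o g1 > a4a7 then y5 > 0. -/
import Mathlib

set_option maxHeartbeats 1600000


/-- The coefficient `y₅ = x₅² - 2x₄x₆ - x₇²` of the cubic at the disease-free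
steady state: identity and positivity when `λ₀g₁ > a₄a₇`. -/
theorem y5_identity_and_pos
    (lam b lamo delta vs a4 a6 a7 p q : ℝ)
    (hlam : 0 < lam) (hb : 0 < b) (hlamo : 0 < lamo) (hdelta : 0 < delta)
    (hvs : 0 < vs) (ha4 : 0 < a4) (ha6 : 0 < a6) (ha7 : 0 < a7)
    (hp0 : 0 ≤ p) (hp1 : p ≤ 1) (hq : q = 1 - p)
    (g1 g2 g3 g4 x4 x5 x6 x7 y5 : ℝ)
    (hg1 : g1 = lam + b + a6) (hg2 : g2 = lamo + delta + b)
    (hg3 : g3 = delta + b + vs) (hg4 : g4 = delta * q + b + a6)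
    (hx4 : x4 = g1 + g2 + vs)
    (hx5 : x5 = g1 * g2 + lamo * g3 + vs * g4)
    (hx6 : x6 = lamo * (vs * g4 + g1 * (delta + b)))
    (hx7 : x7 = a4 * a7)
    (hy5 : y5 = x5 ^ 2 - 2 * x4 * x6 - x7 ^ 2) :
    y5 = (lamo * g1 + a4 * a7) * (lamo * g1 - a4 * a7)
      + lamo ^ 2 * (vs ^ 2 + (delta + b) ^ 2 + 2 * vs * (lam + delta * p + b))
      + (vs * g4 + g1 * (delta + b)) ^ 2 ∧
    (lamo * g1 > a4 * a7 → 0 < y5) := by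
  have hid : y5 = (lamo * g1 + a4 * a7) * (lamo * g1 - a4 * a7)
      + lamo ^ 2 * (vs ^ 2 + (delta + b) ^ 2 + 2 * vs * (lam + delta * p + b))
      + (vs * g4 + g1 * (delta + b)) ^ 2 := by
    subst hq hg1 hg2 hg3 hg4 hx4 hx5 hx6 hx7 hy5; ring
  refine ⟨hid, fun h => ?_⟩
  rw [hid]
  have h1 : 0 < (lamo * g1 + a4 * a7) * (lamo * g1 - a4 * a7) := by
    apply mul_pos <;> nlinarith
  have h2 : 0 < lamo ^ 2 * (vs ^ 2 + (delta + b) ^ 2 + 2 * vs * (lam + delta * p + b)) := by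
    apply mul_pos (by positivity)
    nlinarith [mul_nonneg hdelta.le hp0, sq_nonneg (delta + b)]
  nlinarith [sq_nonneg (vs * g4 + g1 * (delta + b))]
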